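/- Convergence of discretized entropies: with μ, ν, π_j as above, lim_{j→∞} H(ν | π_j(μ)) = H(ν | μ). In particular the limit is independent of the singular part of μ. -/

import Mathlib

open MeasureTheory
open scoped ENNReal Classical

/-- The reverse relative entropy `H(ν|μ) = -∫ log w dν` of normalized Lebesgue measure `ν`
with respect to a measure with a.c. density `w`, valued in the extended reals: it is `+∞`
unless `w > 0` a.e. and `log w` is integrable. -/
noncomputable def Hrev (ν : Measure ℝ) (w : ℝ → ℝ) : EReal :=
  if (∀ᵐ θ ∂ν, 0 < w θ) ∧ Integrable (fun θ => Real.log (w θ)) ν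
    then ((-(∫ θ, Real.log (w θ) ∂ν) : ℝ) : EReal) else (⊤ : EReal)

/-- The `k`-th dyadic arc of generation `j` on the circle parametrized by `[0,2π)`. -/
def dyadicArc (j k : ℕ) : Set ℝ :=
  Set.Ico (2 * Real.pi * k / 2 ^ j) (2 * Real.pi * (k + 1) / 2 ^ j)

/-- The density of the discretization `π_j(μ)`: constant value `2^j μ(I_k^{(j)})` on each
dyadic arc `I_k^{(j)}` of generation `j`. -/
noncomputable def discretizedDensity (μ : Measure ℝ) (j : ℕ) (θ : ℝ) : ℝ :=
  ∑ k ∈ Finset.range (2 ^ j),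
    Set.indicator (dyadicArc j k) (fun _ => (2 : ℝ) ^ j * (μ (dyadicArc j k)).toReal) θ

namespace DiscEnt

open Filter Set

lemma two_pi_pos : (0:ℝ) < 2 * Real.pi := by positivity

lemma len_pos (j : ℕ) : (0:ℝ) < 2 * Real.pi / 2 ^ j := by positivity

/-- index of the dyadic arc containing `θ` -/
noncomputable def nidx (j : ℕ) (θ : ℝ) : ℕ := ⌊θ / (2 * Real.pi / 2 ^ j)⌋₊

lemma dyadicArc_eq (j k : ℕ) :
    dyadicArc j k = Set.Ico ((2 * Real.pi / 2 ^ j) * k) ((2 * Real.pi / 2 ^ j) * (k + 1)) := by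
  unfold dyadicArc; ring_nf

lemma measurableSet_dyadicArc (j k : ℕ) : MeasurableSet (dyadicArc j k) :=
  measurableSet_Ico

lemma volume_dyadicArc (j k : ℕ) :
    volume (dyadicArc j k) = ENNReal.ofReal (2 * Real.pi / 2 ^ j) := by
  rw [dyadicArc_eq, Real.volume_Ico]
  congr 1; ring

lemma dyadicArc_subset {j k : ℕ} (hk : k < 2 ^ j) :
    dyadicArc j k ⊆ Set.Ico 0 (2 * Real.pi) := by
  rw [dyadicArc_eq]
  apply Set.Ico_subset_Ico
  · positivity
  · rw [div_mul_eq_mul_div, div_le_iff₀ (by positivity : (0:ℝ) < 2 ^ j)]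
    have : (k:ℝ) + 1 ≤ 2 ^ j := by exact_mod_cast Nat.succ_le_of_lt hk
    nlinarith [Real.pi_pos]

lemma mem_dyadicArc_iff {θ : ℝ} (hθ : 0 ≤ θ) (j k : ℕ) :
    θ ∈ dyadicArc j k ↔ nidx j θ = k := by
  have hL := len_pos j
  rw [dyadicArc_eq, nidx, Nat.floor_eq_iff (by positivity)]
  constructor
  · rintro ⟨h1, h2⟩
    constructor
    · rwa [le_div_iff₀ hL, mul_comm]
    · rwa [div_lt_iff₀ hL, mul_comm]
  · rintro ⟨h1, h2⟩
    constructor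
    · rwa [mul_comm, ← le_div_iff₀ hL]
    · rwa [mul_comm, ← div_lt_iff₀ hL]

lemma nidx_lt {θ : ℝ} (hθ : θ ∈ Set.Ico 0 (2 * Real.pi)) (j : ℕ) : nidx j θ < 2 ^ j := by
  have hL := len_pos j
  rw [nidx, Nat.floor_lt (div_nonneg hθ.1 hL.le)]
  rw [div_lt_iff₀ hL]
  push_cast
  calc θ < 2 * Real.pi := hθ.2
  _ ≤ 2 ^ j * (2 * Real.pi / 2 ^ j) := by
      rw [mul_div_cancel₀]
      positivity

lemma mem_arc_nidx {θ : ℝ} (hθ : 0 ≤ θ) (j : ℕ) : θ ∈ dyadicArc j (nidx j θ) :=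
  (mem_dyadicArc_iff hθ j _).2 rfl

lemma closedBall_midpoint (j k : ℕ) :
    Metric.closedBall ((2 * Real.pi / 2 ^ j) * k + Real.pi / 2 ^ j) (Real.pi / 2 ^ j)
      = Set.Icc ((2 * Real.pi / 2 ^ j) * k) ((2 * Real.pi / 2 ^ j) * (k + 1)) := by
  rw [Real.closedBall_eq_Icc]
  congr 1 <;> ring

lemma dyadicArc_subset_closedBall (j k : ℕ) :
    dyadicArc j k ⊆
      Metric.closedBall ((2 * Real.pi / 2 ^ j) * k + Real.pi / 2 ^ j) (Real.pi / 2 ^ j) := by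
  rw [closedBall_midpoint, dyadicArc_eq]
  exact Set.Ico_subset_Icc_self

lemma biUnion_dyadicArc (j : ℕ) :
    (⋃ k ∈ Finset.range (2 ^ j), dyadicArc j k) = Set.Ico 0 (2 * Real.pi) := by
  apply Set.Subset.antisymm
  · intro θ hθ
    simp only [Set.mem_iUnion, Finset.mem_range] at hθ
    obtain ⟨k, hk, hmem⟩ := hθ
    exact dyadicArc_subset hk hmem
  · intro θ hθ
    simp only [Set.mem_iUnion, Finset.mem_range]
    exact ⟨nidx j θ, nidx_lt hθ j, mem_arc_nidx hθ.1 j⟩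

lemma pairwise_disjoint_dyadicArc (j : ℕ) :
    (↑(Finset.range (2 ^ j)) : Set ℕ).PairwiseDisjoint (dyadicArc j) := by
  intro k hk l hl hkl
  simp only [Function.onFun]
  rw [Set.disjoint_left]
  intro θ hθk hθl
  have h0 : 0 ≤ θ := by
    rw [dyadicArc_eq] at hθk
    have := hθk.1
    have : (0:ℝ) ≤ (2 * Real.pi / 2 ^ j) * k := by positivity
    linarith [hθk.1]
  exact hkl (((mem_dyadicArc_iff h0 j k).1 hθk).symm.trans ((mem_dyadicArc_iff h0 j l).1 hθl))

lemma discretizedDensity_eq_of_mem {μ : Measure ℝ} {j k : ℕ} (hk : k < 2 ^ j) {θ : ℝ}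
    (hθ : θ ∈ dyadicArc j k) :
    discretizedDensity μ j θ = 2 ^ j * (μ (dyadicArc j k)).toReal := by
  have h0 : 0 ≤ θ := by
    rw [dyadicArc_eq] at hθ
    have h1 : (0:ℝ) ≤ (2 * Real.pi / 2 ^ j) * k := by positivity
    linarith [hθ.1]
  rw [discretizedDensity, Finset.sum_eq_single k]
  · rw [Set.indicator_of_mem hθ]
  · intro l hl hlk
    apply Set.indicator_of_notMem
    intro hmem
    exact hlk (((mem_dyadicArc_iff h0 j l).1 hmem).symm.trans ((mem_dyadicArc_iff h0 j k).1 hθ))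
  · intro hk'
    exact absurd (Finset.mem_range.2 hk) hk'

lemma discretizedDensity_eq {μ : Measure ℝ} {θ : ℝ} (hθ : θ ∈ Set.Ico 0 (2 * Real.pi)) (j : ℕ) :
    discretizedDensity μ j θ = 2 ^ j * (μ (dyadicArc j (nidx j θ))).toReal :=
  discretizedDensity_eq_of_mem (nidx_lt hθ j) (mem_arc_nidx hθ.1 j)

lemma discretizedDensity_of_not_mem {μ : Measure ℝ} {θ : ℝ}
    (hθ : θ ∉ Set.Ico 0 (2 * Real.pi)) (j : ℕ) : discretizedDensity μ j θ = 0 := by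
  rw [discretizedDensity]
  apply Finset.sum_eq_zero
  intro k hk
  exact Set.indicator_of_notMem
    (fun hmem => hθ (dyadicArc_subset (Finset.mem_range.1 hk) hmem)) _

lemma discretizedDensity_nonneg (μ : Measure ℝ) (j : ℕ) (θ : ℝ) :
    0 ≤ discretizedDensity μ j θ := by
  apply Finset.sum_nonneg
  intro k _
  apply Set.indicator_nonneg
  intro _ _
  positivity

lemma measurable_discretizedDensity (μ : Measure ℝ) (j : ℕ) :
    Measurable (discretizedDensity μ j) := by
  apply Finset.measurable_sum
  intro k _
  exact (measurable_const.indicator (measurableSet_dyadicArc j k))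


lemma tendsto_delta :
    Filter.Tendsto (fun j : ℕ => Real.pi / 2 ^ j) Filter.atTop (nhdsWithin 0 (Set.Ioi 0)) := by
  apply tendsto_nhdsWithin_of_tendsto_nhds_of_eventually_within
  · have h : Filter.Tendsto (fun j : ℕ => ((2:ℝ)⁻¹) ^ j) Filter.atTop (nhds 0) :=
      tendsto_pow_atTop_nhds_zero_of_lt_one (by norm_num) (by norm_num)
    have h2 := h.const_mul Real.pi
    rw [mul_zero] at h2
    convert h2 using 2 with j
    rw [div_eq_mul_inv, inv_pow]
  · filter_upwards with j
    have : (0:ℝ) < Real.pi / 2 ^ j := by positivity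
    exact this

lemma ae_tendsto_DD
    (μ μs : Measure ℝ) [IsProbabilityMeasure μ]
    (w : ℝ → ℝ) (hw : Measurable w) (hw0 : ∀ θ, 0 ≤ w θ)
    (ν : Measure ℝ)
    (hν : ν = (ENNReal.ofReal (2 * Real.pi))⁻¹ •
      ((volume : Measure ℝ).restrict (Set.Ico 0 (2 * Real.pi))))
    (hdecomp : μ = ν.withDensity (fun θ => ENNReal.ofReal (w θ)) + μs)
    (hsing : μs ⟂ₘ (volume : Measure ℝ)) :
    ∀ᵐ θ ∂(volume : Measure ℝ), θ ∈ Set.Ico 0 (2 * Real.pi) →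
      Filter.Tendsto (fun j : ℕ => discretizedDensity μ j θ) Filter.atTop (nhds (w θ)) := by
  haveI hμs_fin : IsFiniteMeasure μs :=
    isFiniteMeasure_of_le μ (by rw [hdecomp]; exact Measure.le_add_left (le_refl _))
  set W : Measure ℝ := ν.withDensity (fun θ => ENNReal.ofReal (w θ)) with hW
  have hWle : W ≤ μ := by rw [hdecomp]; exact Measure.le_add_right (le_refl _)
  haveI hW_fin : IsFiniteMeasure W := isFiniteMeasure_of_le μ hWle
  have hs_meas : MeasurableSet (Set.Ico (0:ℝ) (2 * Real.pi)) := measurableSet_Ico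
  -- restriction of ν to an arc
  have hνarc : ∀ j k, k < 2 ^ j → ν.restrict (dyadicArc j k)
      = (ENNReal.ofReal (2 * Real.pi))⁻¹ • (volume : Measure ℝ).restrict (dyadicArc j k) := by
    intro j k hk
    rw [hν, Measure.restrict_smul, Measure.restrict_restrict (measurableSet_dyadicArc j k),
      Set.inter_eq_self_of_subset_left (dyadicArc_subset hk)]
  -- value of W on arcs
  have key : ∀ j k, k < 2 ^ j → (W (dyadicArc j k)).toReal
      = (2 * Real.pi)⁻¹ * ∫ y in dyadicArc j k, w y ∂(volume : Measure ℝ) := by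
    intro j k hk
    rw [hW, withDensity_apply _ (measurableSet_dyadicArc j k)]
    rw [show ∫⁻ a in dyadicArc j k, ENNReal.ofReal (w a) ∂ν
        = (ENNReal.ofReal (2 * Real.pi))⁻¹
          * ∫⁻ a in dyadicArc j k, ENNReal.ofReal (w a) ∂(volume : Measure ℝ) by
      rw [hνarc j k hk, lintegral_smul_measure, smul_eq_mul]]
    rw [ENNReal.toReal_mul, ENNReal.toReal_inv, ENNReal.toReal_ofReal two_pi_pos.le]
    congr 1
    rw [integral_eq_lintegral_of_nonneg_ae (Filter.Eventually.of_forall fun x => hw0 x)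
      hw.aestronglyMeasurable]
  -- integrability of the indicator density
  have hWuniv : W Set.univ ≤ 1 := le_trans (hWle Set.univ) (by simp)
  have hlint_s : ∫⁻ a in Set.Ico (0:ℝ) (2 * Real.pi), ENNReal.ofReal (w a) ∂(volume : Measure ℝ)
      ≤ ENNReal.ofReal (2 * Real.pi) := by
    have h1 : W Set.univ
        = (ENNReal.ofReal (2 * Real.pi))⁻¹
          * ∫⁻ a in Set.Ico (0:ℝ) (2 * Real.pi), ENNReal.ofReal (w a) ∂(volume : Measure ℝ) := by
      rw [hW, withDensity_apply _ MeasurableSet.univ, Measure.restrict_univ, hν,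
        lintegral_smul_measure, smul_eq_mul]
    have h2 := hWuniv
    rw [h1] at h2
    have hc0 : (ENNReal.ofReal (2 * Real.pi)) ≠ 0 :=
      ne_of_gt (ENNReal.ofReal_pos.2 two_pi_pos)
    have hctop : (ENNReal.ofReal (2 * Real.pi)) ≠ ⊤ := ENNReal.ofReal_ne_top
    calc ∫⁻ a in Set.Ico (0:ℝ) (2 * Real.pi), ENNReal.ofReal (w a) ∂(volume : Measure ℝ)
        = ENNReal.ofReal (2 * Real.pi) * ((ENNReal.ofReal (2 * Real.pi))⁻¹
          * ∫⁻ a in Set.Ico (0:ℝ) (2 * Real.pi), ENNReal.ofReal (w a) ∂(volume : Measure ℝ)) := by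
          rw [← mul_assoc, ENNReal.mul_inv_cancel hc0 hctop, one_mul]
      _ ≤ ENNReal.ofReal (2 * Real.pi) * 1 := by
          exact mul_le_mul_right h2 _
      _ = ENNReal.ofReal (2 * Real.pi) := by rw [mul_one]
  have hf_int : Integrable (Set.indicator (Set.Ico (0:ℝ) (2 * Real.pi)) w) (volume : Measure ℝ) := by
    rw [integrable_indicator_iff hs_meas]
    constructor
    · exact hw.aestronglyMeasurable
    · rw [hasFiniteIntegral_iff_ofReal (Filter.Eventually.of_forall fun x => hw0 x)]
      exact lt_of_le_of_lt hlint_s ENNReal.ofReal_lt_top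
  -- the two a.e. differentiation statements
  have hA0 := IsUnifLocDoublingMeasure.ae_tendsto_average (volume : Measure ℝ)
    (hf_int.locallyIntegrable) 1
  have hS0 := (IsUnifLocDoublingMeasure.vitaliFamily (volume : Measure ℝ) 1).ae_tendsto_rnDeriv μs
  have hrn0 : μs.rnDeriv (volume : Measure ℝ) =ᵐ[(volume : Measure ℝ)] 0 :=
    hsing.rnDeriv_ae_eq_zero
  filter_upwards [hA0, hS0, hrn0] with θ hA hS hrn hθs
  set n : ℕ → ℕ := fun j => nidx j θ with hn
  have hnlt : ∀ j, n j < 2 ^ j := fun j => nidx_lt hθs j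
  set mid : ℕ → ℝ := fun j => (2 * Real.pi / 2 ^ j) * (n j) + Real.pi / 2 ^ j with hmid
  set δ : ℕ → ℝ := fun j => Real.pi / 2 ^ j with hδdef
  have hδ := tendsto_delta
  have hball : ∀ j, Metric.closedBall (mid j) (δ j)
      = Set.Icc ((2 * Real.pi / 2 ^ j) * (n j)) ((2 * Real.pi / 2 ^ j) * (n j + 1)) := by
    intro j
    have := closedBall_midpoint j (n j)
    simpa using this
  have hmem : ∀ j, θ ∈ Metric.closedBall (mid j) (1 * δ j) := by
    intro j
    rw [one_mul]
    exact dyadicArc_subset_closedBall j (n j) (mem_arc_nidx hθs.1 j)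
  have harc_sub : ∀ j, dyadicArc j (n j) ⊆ Metric.closedBall (mid j) (δ j) := fun j =>
    dyadicArc_subset_closedBall j (n j)
  -- a.c. part
  have hAv := hA mid δ hδ (Filter.Eventually.of_forall hmem)
  have hvolpos : ∀ j, (0:ℝ) < 2 * Real.pi / 2 ^ j := len_pos
  have havg_eq : ∀ j, (⨍ y in Metric.closedBall (mid j) (δ j),
      Set.indicator (Set.Ico (0:ℝ) (2 * Real.pi)) w y ∂(volume : Measure ℝ))
      = 2 ^ j * (W (dyadicArc j (n j))).toReal := by
    intro j
    rw [hball j, setAverage_eq, measureReal_def, Real.volume_Icc]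
    rw [show (2 * Real.pi / 2 ^ j) * ((n j : ℝ) + 1) - (2 * Real.pi / 2 ^ j) * (n j)
        = 2 * Real.pi / 2 ^ j by ring]
    rw [MeasureTheory.integral_Icc_eq_integral_Ico,
      setIntegral_indicator hs_meas,
      Set.inter_eq_left.2 (by rw [← dyadicArc_eq]; exact dyadicArc_subset (hnlt j))]
    rw [← dyadicArc_eq, key j (n j) (hnlt j), ENNReal.toReal_ofReal (hvolpos j).le]
    rw [smul_eq_mul]
    rw [show (2 * Real.pi / 2 ^ j : ℝ)⁻¹ = 2 ^ j * (2 * Real.pi)⁻¹ by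
      field_simp]
    ring
  rw [Filter.tendsto_congr havg_eq, Set.indicator_of_mem hθs] at hAv
  -- singular part
  have hrnθ : μs.rnDeriv (volume : Measure ℝ) θ = 0 := hrn
  rw [hrnθ] at hS
  have hTB := IsUnifLocDoublingMeasure.tendsto_closedBall_filterAt (volume : Measure ℝ)
    (K := 1) (x := θ) mid δ hδ (Filter.Eventually.of_forall hmem)
  have hS2 := hS.comp hTB
  have hS3 : Filter.Tendsto
      (fun j => (2 * Real.pi) * ((μs (Metric.closedBall (mid j) (δ j))
        / volume (Metric.closedBall (mid j) (δ j))).toReal)) Filter.atTop (nhds 0) := by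
    have h4 := (ENNReal.tendsto_toReal (by simp : (0:ℝ≥0∞) ≠ ⊤)).comp hS2
    simp only [ENNReal.toReal_zero] at h4
    have h5 := h4.const_mul (2 * Real.pi)
    rw [mul_zero] at h5
    exact h5
  have hsq : Filter.Tendsto (fun j => (2:ℝ) ^ j * (μs (dyadicArc j (n j))).toReal)
      Filter.atTop (nhds 0) := by
    apply squeeze_zero (fun j => by positivity) _ hS3
    intro j
    have hvol : volume (Metric.closedBall (mid j) (δ j)) = ENNReal.ofReal (2 * Real.pi / 2 ^ j) := by
      rw [hball j, Real.volume_Icc]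
      congr 1
      ring
    rw [hvol, ENNReal.toReal_div, ENNReal.toReal_ofReal (hvolpos j).le]
    have hmono : (μs (dyadicArc j (n j))).toReal ≤ (μs (Metric.closedBall (mid j) (δ j))).toReal :=
      ENNReal.toReal_mono (measure_ne_top _ _) (measure_mono (harc_sub j))
    rw [show (2 * Real.pi) * ((μs (Metric.closedBall (mid j) (δ j))).toReal / (2 * Real.pi / 2 ^ j))
        = 2 ^ j * (μs (Metric.closedBall (mid j) (δ j))).toReal by
      field_simp]
    have h2j : (0:ℝ) < 2 ^ j := by positivity
    nlinarith [hmono]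
  -- combine
  have hdd : ∀ j, discretizedDensity μ j θ
      = 2 ^ j * (W (dyadicArc j (n j))).toReal + 2 ^ j * (μs (dyadicArc j (n j))).toReal := by
    intro j
    rw [discretizedDensity_eq hθs j]
    have : μ (dyadicArc j (n j)) = W (dyadicArc j (n j)) + μs (dyadicArc j (n j)) := by
      conv_lhs => rw [hdecomp]
      rfl
    rw [this, ENNReal.toReal_add (measure_ne_top _ _) (measure_ne_top _ _)]
    ring
  rw [Filter.tendsto_congr hdd]
  have := hAv.add hsq
  rw [add_zero] at this
  exact this

lemma max_sub_max_neg (a : ℝ) : max a 0 - max (-a) 0 = a := by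
  rcases le_total a 0 with h | h
  · rw [max_eq_right h, max_eq_left (neg_nonneg.2 h)]; ring
  · rw [max_eq_left h, max_eq_right (neg_nonpos.2 h)]; ring

lemma max_add_max_neg (a : ℝ) : max a 0 + max (-a) 0 = |a| := by
  rcases le_total a 0 with h | h
  · rw [max_eq_right h, max_eq_left (neg_nonneg.2 h), abs_of_nonpos h]; ring
  · rw [max_eq_left h, max_eq_right (neg_nonpos.2 h), abs_of_nonneg h]; ring

lemma maxlog_le {x : ℝ} (hx : 0 ≤ x) : max (Real.log x) 0 ≤ x := by
  rcases eq_or_lt_of_le hx with h | h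
  · rw [← h, Real.log_zero, max_self]
  · exact max_le (le_trans (Real.log_le_sub_one_of_pos h) (by linarith)) hx

lemma logpos_bound {M x : ℝ} (hM : 1 ≤ M) (hx : 0 ≤ x) :
    max (Real.log x) 0 ≤ min (max (Real.log x) 0) M + 2 * Real.exp (-(M / 2)) * x := by
  rcases le_or_gt (max (Real.log x) 0) M with h | h
  · rw [min_eq_left h]
    have h1 : 0 ≤ 2 * Real.exp (-(M / 2)) * x :=
      mul_nonneg (mul_nonneg (by norm_num) (Real.exp_pos _).le) hx
    linarith
  · rw [min_eq_right h.le]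
    have hM0 : (0:ℝ) < M := lt_of_lt_of_le one_pos hM
    have hmax : max (Real.log x) 0 = Real.log x := by
      rcases le_total (Real.log x) 0 with h1 | h1
      · rw [max_eq_right h1] at h; exact absurd h (not_lt.2 hM0.le)
      · exact max_eq_left h1
    rw [hmax] at h ⊢
    have hxpos : 0 < x := by
      rcases eq_or_lt_of_le hx with h2 | h2
      · rw [← h2, Real.log_zero] at h; exact absurd h (not_lt.2 hM0.le)
      · exact h2
    have hexp : Real.exp M < x := (Real.lt_log_iff_exp_lt hxpos).1 h
    have hsq : Real.exp (M / 2) ≤ Real.sqrt x := by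
      rw [Real.le_sqrt (Real.exp_pos _).le hx, sq, ← Real.exp_add]
      rw [show M / 2 + M / 2 = M by ring]
      exact hexp.le
    have hlog2 : Real.log x ≤ 2 * Real.sqrt x - 2 := by
      have h1 : Real.log (Real.sqrt x) ≤ Real.sqrt x - 1 :=
        Real.log_le_sub_one_of_pos (Real.sqrt_pos.2 hxpos)
      have h2 : Real.log (Real.sqrt x) = Real.log x / 2 := Real.log_sqrt hx
      linarith
    have hs : Real.sqrt x ≤ Real.exp (-(M / 2)) * x := by
      have h1 : Real.sqrt x * Real.sqrt x = x := Real.mul_self_sqrt hx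
      have h2 : Real.exp (-(M / 2)) * Real.exp (M / 2) = 1 := by
        rw [← Real.exp_add]; simp
      have h3 : (0:ℝ) < Real.exp (-(M / 2)) := Real.exp_pos _
      calc Real.sqrt x = (Real.exp (-(M / 2)) * Real.exp (M / 2)) * Real.sqrt x := by
            rw [h2, one_mul]
        _ ≤ Real.exp (-(M / 2)) * (Real.sqrt x * Real.sqrt x) := by
            rw [mul_assoc]
            apply mul_le_mul_of_nonneg_left _ h3.le
            exact mul_le_mul_of_nonneg_right hsq (Real.sqrt_nonneg x)
        _ = Real.exp (-(M / 2)) * x := by rw [h1]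
    linarith

/-- `⊤`-valued negative-log gadget used for the Fatou argument. -/
noncomputable def Fneg (t : ℝ) : ℝ≥0∞ :=
  if 0 < t then ENNReal.ofReal (max (-Real.log t) 0) else ⊤

lemma measurable_Fneg : Measurable Fneg := by
  apply Measurable.ite (measurableSet_lt measurable_const measurable_id)
  · exact ENNReal.measurable_ofReal.comp (Real.measurable_log.neg.max measurable_const)
  · exact measurable_const

lemma Fneg_tendsto_top {u : ℕ → ℝ} (hu : Filter.Tendsto u Filter.atTop (nhds 0)) :
    Filter.Tendsto (fun n => Fneg (u n)) Filter.atTop (nhds ⊤) := by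
  rw [ENNReal.tendsto_nhds_top_iff_nat]
  intro m
  have hev : ∀ᶠ n in Filter.atTop, |u n| < Real.exp (-((m:ℝ) + 1)) := by
    have h2 := hu (Metric.ball_mem_nhds (0:ℝ) (Real.exp_pos (-((m:ℝ) + 1))))
    filter_upwards [h2] with n hn
    simpa [Real.dist_eq] using hn
  filter_upwards [hev] with n hn
  rcases le_or_gt (u n) 0 with h | h
  · rw [Fneg, if_neg (not_lt.2 h)]
    exact ENNReal.natCast_lt_top m
  · rw [Fneg, if_pos h]
    have h2 : u n < Real.exp (-((m:ℝ) + 1)) := lt_of_le_of_lt (le_abs_self _) hn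
    have h3 : Real.log (u n) < -((m:ℝ) + 1) := by
      rw [← Real.log_exp (-((m:ℝ) + 1))]
      exact Real.log_lt_log h h2
    have h4 : (m:ℝ) + 1 ≤ max (-Real.log (u n)) 0 := le_max_of_le_left (by linarith)
    calc (m : ℝ≥0∞) = ENNReal.ofReal (m : ℝ) := by rw [ENNReal.ofReal_natCast]
      _ < ENNReal.ofReal (max (-Real.log (u n)) 0) := by
          rw [ENNReal.ofReal_lt_ofReal_iff (lt_of_lt_of_le (by positivity) h4)]
          linarith

end DiscEnt

/-- Convergence of discretized entropies: `lim_{j→∞} H(ν | π_j(μ)) = H(ν | μ)`; in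
particular the limit is independent of the singular part of `μ`. -/
theorem discretized_entropies_converge
    (μ μs : Measure ℝ) [IsProbabilityMeasure μ]
    (w : ℝ → ℝ) (hw : Measurable w) (hw0 : ∀ θ, 0 ≤ w θ)
    (ν : Measure ℝ)
    (hν : ν = (ENNReal.ofReal (2 * Real.pi))⁻¹ •
      ((volume : Measure ℝ).restrict (Set.Ico 0 (2 * Real.pi))))
    (hdecomp : μ = ν.withDensity (fun θ => ENNReal.ofReal (w θ)) + μs)
    (hsing : μs ⟂ₘ (volume : Measure ℝ))
    (hcircle : μ (Set.Ico 0 (2 * Real.pi))ᶜ = 0) :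
    Filter.Tendsto (fun j : ℕ => Hrev ν (discretizedDensity μ j)) Filter.atTop
      (nhds (Hrev ν w)) := by
  classical
  have hsmeas : MeasurableSet (Set.Ico (0:ℝ) (2 * Real.pi)) := measurableSet_Ico
  have hc0 : (ENNReal.ofReal (2 * Real.pi)) ≠ 0 :=
    ne_of_gt (ENNReal.ofReal_pos.2 DiscEnt.two_pi_pos)
  have hctop : (ENNReal.ofReal (2 * Real.pi)) ≠ ⊤ := ENNReal.ofReal_ne_top
  have hνs : ν (Set.Ico (0:ℝ) (2 * Real.pi))ᶜ = 0 := by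
    rw [hν, Measure.smul_apply, Measure.restrict_apply hsmeas.compl,
      Set.compl_inter_self, measure_empty, smul_eq_mul, mul_zero]
  have hν_ae_mem : ∀ᵐ θ ∂ν, θ ∈ Set.Ico (0:ℝ) (2 * Real.pi) := by
    rw [MeasureTheory.ae_iff]
    exact hνs
  haveI hνprob : IsProbabilityMeasure ν := by
    constructor
    rw [hν, Measure.smul_apply, Measure.restrict_apply MeasurableSet.univ, Set.univ_inter,
      Real.volume_Ico, sub_zero, smul_eq_mul, ENNReal.inv_mul_cancel hc0 hctop]
  have hνarc : ∀ j k : ℕ, k < 2 ^ j → ν (dyadicArc j k) = ENNReal.ofReal (((2:ℝ) ^ j)⁻¹) := by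
    intro j k hk
    rw [hν, Measure.smul_apply, Measure.restrict_apply (DiscEnt.measurableSet_dyadicArc j k),
      Set.inter_eq_left.2 (DiscEnt.dyadicArc_subset hk), DiscEnt.volume_dyadicArc,
      smul_eq_mul, ← ENNReal.ofReal_inv_of_pos DiscEnt.two_pi_pos, ← ENNReal.ofReal_mul
        (by positivity)]
    congr 1
    field_simp
  have hνarcR : ∀ j k : ℕ, k < 2 ^ j → (ν (dyadicArc j k)).toReal = ((2:ℝ) ^ j)⁻¹ := by
    intro j k hk
    rw [hνarc j k hk, ENNReal.toReal_ofReal (by positivity)]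
  have hνac : ν ≪ (volume : Measure ℝ) := by
    rw [hν]
    exact Measure.smul_absolutelyContinuous.trans
      (Measure.absolutelyContinuous_of_le Measure.restrict_le_self)
  have hconv : ∀ᵐ θ ∂ν,
      Filter.Tendsto (fun j : ℕ => discretizedDensity μ j θ) Filter.atTop (nhds (w θ)) := by
    have h := DiscEnt.ae_tendsto_DD μ μs w hw hw0 ν hν hdecomp hsing
    filter_upwards [hνac.ae_le h, hν_ae_mem] with θ h1 h2 using h1 h2
  -- basic facts about the discretized densities
  have hDmeas := DiscEnt.measurable_discretizedDensity μ
  have hDnn := DiscEnt.discretizedDensity_nonneg μ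
  have hDbd : ∀ (j : ℕ) θ, discretizedDensity μ j θ ≤ 2 ^ j := by
    intro j θ
    by_cases h : θ ∈ Set.Ico (0:ℝ) (2 * Real.pi)
    · rw [DiscEnt.discretizedDensity_eq h j]
      have h1 : (μ (dyadicArc j (DiscEnt.nidx j θ))).toReal ≤ 1 := by
        rw [show (1:ℝ) = (1 : ℝ≥0∞).toReal by simp]
        exact ENNReal.toReal_mono ENNReal.one_ne_top prob_le_one
      nlinarith [pow_pos (by norm_num : (0:ℝ) < 2) j]
    · rw [DiscEnt.discretizedDensity_of_not_mem h]
      positivity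
  have hDint : ∀ j : ℕ, Integrable (discretizedDensity μ j) ν := by
    intro j
    refine Integrable.mono' (integrable_const ((2:ℝ) ^ j)) (hDmeas j).aestronglyMeasurable ?_
    filter_upwards with θ
    rw [Real.norm_eq_abs, abs_of_nonneg (hDnn j θ)]
    exact hDbd j θ
  have hlogDbd : ∀ j : ℕ, ∃ C : ℝ, ∀ θ, |Real.log (discretizedDensity μ j θ)| ≤ C := by
    intro j
    have h2j : 0 < 2 ^ j := Nat.pow_pos (by norm_num)
    have hne : (Finset.range (2 ^ j)).Nonempty := ⟨0, Finset.mem_range.2 h2j⟩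
    refine ⟨(Finset.range (2 ^ j)).sup' hne
      (fun k => |Real.log ((2:ℝ) ^ j * (μ (dyadicArc j k)).toReal)|), fun θ => ?_⟩
    by_cases h : θ ∈ Set.Ico (0:ℝ) (2 * Real.pi)
    · rw [DiscEnt.discretizedDensity_eq h j]
      exact Finset.le_sup' (fun k => |Real.log ((2:ℝ) ^ j * (μ (dyadicArc j k)).toReal)|)
        (Finset.mem_range.2 (DiscEnt.nidx_lt h j))
    · rw [DiscEnt.discretizedDensity_of_not_mem h, Real.log_zero, abs_zero]
      exact le_trans (abs_nonneg (Real.log ((2:ℝ) ^ j * (μ (dyadicArc j 0)).toReal)))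
        (Finset.le_sup' (fun k => |Real.log ((2:ℝ) ^ j * (μ (dyadicArc j k)).toReal)|)
          (Finset.mem_range.2 h2j))
  have hlogDint : ∀ j : ℕ, Integrable (fun θ => Real.log (discretizedDensity μ j θ)) ν := by
    intro j
    obtain ⟨C, hC⟩ := hlogDbd j
    refine Integrable.mono' (integrable_const C)
      ((Real.measurable_log.comp (hDmeas j)).aestronglyMeasurable) ?_
    filter_upwards with θ using hC θ
  -- splitting an integral over the dyadic arcs
  have hres : ν.restrict (Set.Ico (0:ℝ) (2 * Real.pi)) = ν :=
    Measure.restrict_eq_self_of_ae_mem hν_ae_mem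
  have hsum : ∀ (j : ℕ) (g : ℝ → ℝ), Integrable g ν →
      ∫ θ, g θ ∂ν = ∑ k ∈ Finset.range (2 ^ j), ∫ θ in dyadicArc j k, g θ ∂ν := by
    intro j g hg
    conv_lhs => rw [← hres]
    have h1 : (Set.Ico (0:ℝ) (2 * Real.pi)) = ⋃ k ∈ Finset.range (2 ^ j), dyadicArc j k :=
      (DiscEnt.biUnion_dyadicArc j).symm
    rw [show ν.restrict (Set.Ico (0:ℝ) (2 * Real.pi))
        = ν.restrict (⋃ k ∈ Finset.range (2 ^ j), dyadicArc j k) by rw [← h1]]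
    exact integral_biUnion_finset _ (fun k _ => DiscEnt.measurableSet_dyadicArc j k)
      (DiscEnt.pairwise_disjoint_dyadicArc j) (fun k _ => hg.integrableOn)
  have hI1 : ∀ j : ℕ, ∫ θ, discretizedDensity μ j θ ∂ν ≤ 1 := by
    intro j
    rw [hsum j _ (hDint j)]
    have harc : ∀ k ∈ Finset.range (2 ^ j), ∫ θ in dyadicArc j k, discretizedDensity μ j θ ∂ν
        = (μ (dyadicArc j k)).toReal := by
      intro k hk
      rw [setIntegral_congr_fun (DiscEnt.measurableSet_dyadicArc j k)
        (fun θ hθ => DiscEnt.discretizedDensity_eq_of_mem (Finset.mem_range.1 hk) hθ)]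
      rw [setIntegral_const, measureReal_def, hνarcR j k (Finset.mem_range.1 hk), smul_eq_mul, ← mul_assoc,
        inv_mul_cancel₀ (by positivity : ((2:ℝ) ^ j) ≠ 0), one_mul]
    rw [Finset.sum_congr rfl harc,
      ← ENNReal.toReal_sum (fun k _ => measure_ne_top μ (dyadicArc j k)),
      ← measure_biUnion_finset (DiscEnt.pairwise_disjoint_dyadicArc j)
        (fun k _ => DiscEnt.measurableSet_dyadicArc j k),
      DiscEnt.biUnion_dyadicArc]
    exact ENNReal.toReal_le_of_le_ofReal zero_le_one (by simpa using prob_le_one)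
  have hPle : ∀ j : ℕ, ∫ θ, max (Real.log (discretizedDensity μ j θ)) 0 ∂ν ≤ 1 := by
    intro j
    refine le_trans (integral_mono_ae (hlogDint j).pos_part (hDint j) ?_) (hI1 j)
    filter_upwards with θ using DiscEnt.maxlog_le (hDnn j θ)
  have hlog_split : ∀ j : ℕ, ∫ θ, Real.log (discretizedDensity μ j θ) ∂ν
      = (∫ θ, max (Real.log (discretizedDensity μ j θ)) 0 ∂ν)
        - ∫ θ, max (-Real.log (discretizedDensity μ j θ)) 0 ∂ν := by
    intro j
    calc ∫ θ, Real.log (discretizedDensity μ j θ) ∂ν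
        = ∫ θ, (max (Real.log (discretizedDensity μ j θ)) 0
            - max (-Real.log (discretizedDensity μ j θ)) 0) ∂ν :=
          integral_congr_ae (Filter.Eventually.of_forall fun θ =>
            (DiscEnt.max_sub_max_neg _).symm)
      _ = _ := integral_sub (hlogDint j).pos_part (hlogDint j).neg_part
  have hNlin : ∀ j : ℕ, ∫ θ, max (-Real.log (discretizedDensity μ j θ)) 0 ∂ν
      = (∫⁻ θ, ENNReal.ofReal (max (-Real.log (discretizedDensity μ j θ)) 0) ∂ν).toReal := by
    intro j
    have hm : Measurable (fun θ => max (-Real.log (discretizedDensity μ j θ)) 0) :=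
      ((Real.measurable_log.comp (hDmeas j)).neg.max measurable_const)
    have h0 : 0 ≤ᵐ[ν] (fun θ => max (-Real.log (discretizedDensity μ j θ)) 0) :=
      Filter.Eventually.of_forall fun θ => le_max_right _ _
    rw [integral_eq_lintegral_of_nonneg_ae h0 hm.aestronglyMeasurable]
  have hNtop : ∀ j : ℕ,
      ∫⁻ θ, ENNReal.ofReal (max (-Real.log (discretizedDensity μ j θ)) 0) ∂ν ≠ ⊤ := by
    intro j
    have h0 : 0 ≤ᵐ[ν] (fun θ => max (-Real.log (discretizedDensity μ j θ)) 0) :=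
      Filter.Eventually.of_forall fun θ => le_max_right _ _
    have h1 : HasFiniteIntegral (fun θ => max (-Real.log (discretizedDensity μ j θ)) 0) ν :=
      (hlogDint j).neg_part.2
    rw [hasFiniteIntegral_iff_ofReal h0] at h1
    exact h1.ne
  -- facts about the a.c. part
  have hWle : ν.withDensity (fun θ => ENNReal.ofReal (w θ)) ≤ μ := by
    rw [hdecomp]; exact Measure.le_add_right (le_refl _)
  have hw_int : Integrable w ν := by
    refine ⟨hw.aestronglyMeasurable, ?_⟩
    rw [hasFiniteIntegral_iff_ofReal (Filter.Eventually.of_forall hw0)]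
    have h1 : ∫⁻ θ, ENNReal.ofReal (w θ) ∂ν
        = ν.withDensity (fun θ => ENNReal.ofReal (w θ)) Set.univ := by
      rw [withDensity_apply _ MeasurableSet.univ, Measure.restrict_univ]
    rw [h1]
    exact lt_of_le_of_lt (hWle Set.univ) (by rw [measure_univ]; exact ENNReal.one_lt_top)
  have hWarcInt : ∀ j k : ℕ, ∫ θ in dyadicArc j k, w θ ∂ν
      = (ν.withDensity (fun θ => ENNReal.ofReal (w θ)) (dyadicArc j k)).toReal := by
    intro j k
    rw [withDensity_apply _ (DiscEnt.measurableSet_dyadicArc j k)]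
    have h0 : 0 ≤ᵐ[ν.restrict (dyadicArc j k)] w := Filter.Eventually.of_forall hw0
    rw [integral_eq_lintegral_of_nonneg_ae h0 hw.aestronglyMeasurable]
  by_cases hcond : (∀ᵐ θ ∂ν, 0 < w θ) ∧ Integrable (fun θ => Real.log (w θ)) ν
  · obtain ⟨hpos, hint⟩ := hcond
    have harcpos : ∀ j k : ℕ, k < 2 ^ j → 0 < (2:ℝ) ^ j * (μ (dyadicArc j k)).toReal := by
      intro j k hk
      have hWarc : ν.withDensity (fun θ => ENNReal.ofReal (w θ)) (dyadicArc j k) ≠ 0 := by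
        intro h0
        have hmof : Measurable (fun θ : ℝ => ENNReal.ofReal (w θ)) :=
          ENNReal.measurable_ofReal.comp hw
        rw [withDensity_apply _ (DiscEnt.measurableSet_dyadicArc j k),
          lintegral_eq_zero_iff hmof] at h0
        have h1 : ∀ᵐ θ ∂ν.restrict (dyadicArc j k), 0 < w θ := ae_restrict_of_ae hpos
        have h2 : ∀ᵐ (θ:ℝ) ∂ν.restrict (dyadicArc j k), False := by
          filter_upwards [h1, h0] with θ h3 h4
          simp only [Function.comp_apply, Pi.zero_apply, ENNReal.ofReal_eq_zero] at h4
          linarith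
        rw [Filter.eventually_false_iff_eq_bot, ae_eq_bot,
          Measure.restrict_eq_zero, hνarc j k hk] at h2
        exact (ENNReal.ofReal_pos.2 (by positivity)).ne' h2
      have hμarc : μ (dyadicArc j k) ≠ 0 := by
        intro h0
        exact hWarc (le_antisymm (le_trans (hWle _) h0.le) zero_le)
      have := ENNReal.toReal_pos hμarc (measure_ne_top μ _)
      positivity
    have hDpos : ∀ j : ℕ, ∀ᵐ θ ∂ν, 0 < discretizedDensity μ j θ := by
      intro j
      filter_upwards [hν_ae_mem] with θ hθ
      rw [DiscEnt.discretizedDensity_eq hθ j]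
      exact harcpos j _ (DiscEnt.nidx_lt hθ j)
    have hquot_int : ∀ j : ℕ, Integrable (fun θ => (discretizedDensity μ j θ)⁻¹ * w θ) ν := by
      intro j
      refine (fun h : ∃ C : ℝ, ∀ θ, ‖(discretizedDensity μ j θ)⁻¹‖ ≤ C =>
        Integrable.bdd_mul (c := h.choose) hw_int ((hDmeas j).inv.aestronglyMeasurable)
          (ae_of_all _ h.choose_spec)) ?_
      have h2j : 0 < 2 ^ j := Nat.pow_pos (by norm_num)
      refine ⟨(Finset.range (2 ^ j)).sup' ⟨0, Finset.mem_range.2 h2j⟩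
        (fun k => ((2:ℝ) ^ j * (μ (dyadicArc j k)).toReal)⁻¹), fun θ => ?_⟩
      have hCnn : (0:ℝ) ≤ (Finset.range (2 ^ j)).sup' ⟨0, Finset.mem_range.2 h2j⟩
          (fun k => ((2:ℝ) ^ j * (μ (dyadicArc j k)).toReal)⁻¹) :=
        le_trans (by positivity)
          (Finset.le_sup' (fun k => ((2:ℝ) ^ j * (μ (dyadicArc j k)).toReal)⁻¹)
            (Finset.mem_range.2 h2j))
      by_cases h : θ ∈ Set.Ico (0:ℝ) (2 * Real.pi)
      · rw [Real.norm_eq_abs, abs_of_nonneg (inv_nonneg.2 (hDnn j θ)),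
          DiscEnt.discretizedDensity_eq h j]
        exact Finset.le_sup' (fun k => ((2:ℝ) ^ j * (μ (dyadicArc j k)).toReal)⁻¹)
          (Finset.mem_range.2 (DiscEnt.nidx_lt h j))
      · rw [DiscEnt.discretizedDensity_of_not_mem h]
        simpa using hCnn
    have hI2 : ∀ j : ℕ, ∫ θ, (discretizedDensity μ j θ)⁻¹ * w θ ∂ν ≤ 1 := by
      intro j
      rw [hsum j _ (hquot_int j)]
      have hterm : ∀ k ∈ Finset.range (2 ^ j),
          ∫ θ in dyadicArc j k, (discretizedDensity μ j θ)⁻¹ * w θ ∂ν ≤ ((2:ℝ) ^ j)⁻¹ := by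
        intro k hk
        have hk' := Finset.mem_range.1 hk
        have hconst : Set.EqOn (fun θ => (discretizedDensity μ j θ)⁻¹ * w θ)
            (fun θ => ((2:ℝ) ^ j * (μ (dyadicArc j k)).toReal)⁻¹ * w θ) (dyadicArc j k) := by
          intro θ hθ
          simp only
          rw [DiscEnt.discretizedDensity_eq_of_mem hk' hθ]
        rw [setIntegral_congr_fun (DiscEnt.measurableSet_dyadicArc j k) hconst,
          integral_const_mul, hWarcInt j k]
        have hWμ : (ν.withDensity (fun θ => ENNReal.ofReal (w θ)) (dyadicArc j k)).toReal
            ≤ (μ (dyadicArc j k)).toReal :=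
          ENNReal.toReal_mono (measure_ne_top μ _) (hWle _)
        have hp := harcpos j k hk'
        have hm0 : (μ (dyadicArc j k)).toReal ≠ 0 := by
          intro h0; rw [h0, mul_zero] at hp; exact lt_irrefl _ hp
        calc ((2:ℝ) ^ j * (μ (dyadicArc j k)).toReal)⁻¹
              * (ν.withDensity (fun θ => ENNReal.ofReal (w θ)) (dyadicArc j k)).toReal
            ≤ ((2:ℝ) ^ j * (μ (dyadicArc j k)).toReal)⁻¹ * (μ (dyadicArc j k)).toReal :=
              mul_le_mul_of_nonneg_left hWμ (inv_nonneg.2 hp.le)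
          _ = ((2:ℝ) ^ j)⁻¹ := by
              rw [mul_inv, mul_assoc, inv_mul_cancel₀ hm0, mul_one]
      calc ∑ k ∈ Finset.range (2 ^ j), ∫ θ in dyadicArc j k, (discretizedDensity μ j θ)⁻¹ * w θ ∂ν
          ≤ ∑ _k ∈ Finset.range (2 ^ j), ((2:ℝ) ^ j)⁻¹ := Finset.sum_le_sum hterm
        _ = 1 := by
            rw [Finset.sum_const, Finset.card_range, nsmul_eq_mul]
            push_cast
            field_simp
    have hlow : ∀ j : ℕ, ∫ θ, Real.log (w θ) ∂ν
        ≤ ∫ θ, Real.log (discretizedDensity μ j θ) ∂ν := by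
      intro j
      have hpt : ∀ᵐ θ ∂ν, Real.log (w θ) - Real.log (discretizedDensity μ j θ)
          ≤ (discretizedDensity μ j θ)⁻¹ * w θ - 1 := by
        filter_upwards [hpos, hDpos j] with θ h1 h2
        have h3 := Real.log_le_sub_one_of_pos (div_pos h1 h2)
        rw [Real.log_div (ne_of_gt h1) (ne_of_gt h2), div_eq_inv_mul] at h3
        exact h3
      have h5 := integral_mono_ae (hint.sub (hlogDint j))
        ((hquot_int j).sub (integrable_const 1)) hpt
      have h5' : ∫ θ, (Real.log (w θ) - Real.log (discretizedDensity μ j θ)) ∂ν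
          ≤ ∫ θ, ((discretizedDensity μ j θ)⁻¹ * w θ - 1) ∂ν := h5
      have he1 : ∫ θ, (Real.log (w θ) - Real.log (discretizedDensity μ j θ)) ∂ν
          = (∫ θ, Real.log (w θ) ∂ν) - ∫ θ, Real.log (discretizedDensity μ j θ) ∂ν :=
        integral_sub hint (hlogDint j)
      have he2 : ∫ θ, ((discretizedDensity μ j θ)⁻¹ * w θ - 1) ∂ν
          = (∫ θ, (discretizedDensity μ j θ)⁻¹ * w θ ∂ν) - ∫ _θ, (1:ℝ) ∂ν :=
        integral_sub (hquot_int j) (integrable_const 1)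
      have he3 : ∫ _θ, (1:ℝ) ∂ν = 1 := by
        rw [integral_const, measureReal_def, measure_univ, ENNReal.toReal_one, one_smul]
      rw [he1, he2, he3] at h5'
      have h6 := hI2 j
      linarith
    have hβ : ∀ ε : ℝ, 0 < ε → ∀ᶠ j in Filter.atTop,
        ∫ θ, max (Real.log (discretizedDensity μ j θ)) 0 ∂ν
          ≤ (∫ θ, max (Real.log (w θ)) 0 ∂ν) + ε := by
      intro ε hε
      set M : ℝ := max 1 (-2 * Real.log (ε/4)) with hM
      have hM1 : 1 ≤ M := le_max_left _ _
      have hMexp : 2 * Real.exp (-(M/2)) ≤ ε/2 := by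
        have h1 : -(M/2) ≤ Real.log (ε/4) := by
          have h2 := le_max_right 1 (-2 * Real.log (ε/4))
          rw [← hM] at h2
          linarith
        have h2 : Real.exp (-(M/2)) ≤ ε/4 := by
          calc Real.exp (-(M/2)) ≤ Real.exp (Real.log (ε/4)) := Real.exp_le_exp.2 h1
            _ = ε/4 := Real.exp_log (by linarith)
        linarith
      have hminw_int : Integrable (fun θ => min (max (Real.log (w θ)) 0) M) ν := by
        refine Integrable.mono' (integrable_const M)
          ((((Real.measurable_log.comp hw).max measurable_const).min
            measurable_const).aestronglyMeasurable) ?_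
        filter_upwards with θ
        rw [Real.norm_eq_abs, abs_of_nonneg (le_min (le_max_right _ _) (by linarith))]
        exact min_le_right _ _
      have hminD_int : ∀ j : ℕ,
          Integrable (fun θ => min (max (Real.log (discretizedDensity μ j θ)) 0) M) ν := by
        intro j
        refine Integrable.mono' (integrable_const M)
          ((((Real.measurable_log.comp (hDmeas j)).max measurable_const).min
            measurable_const).aestronglyMeasurable) ?_
        filter_upwards with θ
        rw [Real.norm_eq_abs, abs_of_nonneg (le_min (le_max_right _ _) (by linarith))]
        exact min_le_right _ _
      have hDCT : Filter.Tendsto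
          (fun j => ∫ θ, min (max (Real.log (discretizedDensity μ j θ)) 0) M ∂ν)
          Filter.atTop (nhds (∫ θ, min (max (Real.log (w θ)) 0) M ∂ν)) := by
        apply tendsto_integral_of_dominated_convergence (fun _ => M)
        · intro j
          exact (((Real.measurable_log.comp (hDmeas j)).max measurable_const).min
            measurable_const).aestronglyMeasurable
        · exact integrable_const M
        · intro j
          filter_upwards with θ
          rw [Real.norm_eq_abs, abs_of_nonneg (le_min (le_max_right _ _) (by linarith))]
          exact min_le_right _ _
        · filter_upwards [hconv, hpos] with θ h1 h2
          have h3 : Filter.Tendsto (fun j => Real.log (discretizedDensity μ j θ))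
              Filter.atTop (nhds (Real.log (w θ))) :=
            ((Real.continuousAt_log (ne_of_gt h2)).tendsto).comp h1
          exact (h3.max tendsto_const_nhds).min tendsto_const_nhds
      have hminle : ∫ θ, min (max (Real.log (w θ)) 0) M ∂ν
          ≤ ∫ θ, max (Real.log (w θ)) 0 ∂ν :=
        integral_mono hminw_int hint.pos_part (fun θ => min_le_left _ _)
      have hev := hDCT.eventually_lt_const
        (lt_add_of_pos_right (∫ θ, min (max (Real.log (w θ)) 0) M ∂ν)
          (by linarith : (0:ℝ) < ε/4))
      filter_upwards [hev] with j hj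
      have hptb : ∫ θ, max (Real.log (discretizedDensity μ j θ)) 0 ∂ν
          ≤ (∫ θ, min (max (Real.log (discretizedDensity μ j θ)) 0) M ∂ν)
            + 2 * Real.exp (-(M/2)) * ∫ θ, discretizedDensity μ j θ ∂ν := by
        have h1 := integral_mono_ae (hlogDint j).pos_part
          ((hminD_int j).add ((hDint j).const_mul (2 * Real.exp (-(M/2)))))
          (Filter.Eventually.of_forall fun θ => DiscEnt.logpos_bound hM1 (hDnn j θ))
        have h1' : ∫ θ, max (Real.log (discretizedDensity μ j θ)) 0 ∂ν
            ≤ ∫ θ, (min (max (Real.log (discretizedDensity μ j θ)) 0) M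
              + 2 * Real.exp (-(M/2)) * discretizedDensity μ j θ) ∂ν := h1
        have he : ∫ θ, (min (max (Real.log (discretizedDensity μ j θ)) 0) M
              + 2 * Real.exp (-(M/2)) * discretizedDensity μ j θ) ∂ν
            = (∫ θ, min (max (Real.log (discretizedDensity μ j θ)) 0) M ∂ν)
              + ∫ θ, 2 * Real.exp (-(M/2)) * discretizedDensity μ j θ ∂ν :=
          integral_add (hminD_int j) ((hDint j).const_mul _)
        have he2 : ∫ θ, 2 * Real.exp (-(M/2)) * discretizedDensity μ j θ ∂ν
            = 2 * Real.exp (-(M/2)) * ∫ θ, discretizedDensity μ j θ ∂ν :=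
          integral_const_mul _ _
        rw [he, he2] at h1'
        exact h1'
      have h2 : 2 * Real.exp (-(M/2)) * ∫ θ, discretizedDensity μ j θ ∂ν ≤ ε/2 := by
        have h3 := hI1 j
        have h4 : (0:ℝ) ≤ 2 * Real.exp (-(M/2)) := by positivity
        nlinarith [integral_nonneg (f := discretizedDensity μ j) (μ := ν) (hDnn j)]
      linarith [hptb, h2, hminle, hj.le]
    have hwlog_meas : Measurable (fun θ => max (-Real.log (w θ)) 0) :=
      (Real.measurable_log.comp hw).neg.max measurable_const
    have h0w : 0 ≤ᵐ[ν] (fun θ => max (-Real.log (w θ)) 0) :=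
      Filter.Eventually.of_forall fun θ => le_max_right _ _
    have hNw_lin : ∫ θ, max (-Real.log (w θ)) 0 ∂ν
        = (∫⁻ θ, ENNReal.ofReal (max (-Real.log (w θ)) 0) ∂ν).toReal :=
      integral_eq_lintegral_of_nonneg_ae h0w hwlog_meas.aestronglyMeasurable
    have haw_top : ∫⁻ θ, ENNReal.ofReal (max (-Real.log (w θ)) 0) ∂ν ≠ ⊤ := by
      have h1 : HasFiniteIntegral (fun θ => max (-Real.log (w θ)) 0) ν := hint.neg_part.2
      rw [hasFiniteIntegral_iff_ofReal h0w] at h1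
      exact h1.ne
    have hfatou : (∫⁻ θ, ENNReal.ofReal (max (-Real.log (w θ)) 0) ∂ν)
        ≤ Filter.liminf (fun j =>
          ∫⁻ θ, ENNReal.ofReal (max (-Real.log (discretizedDensity μ j θ)) 0) ∂ν)
          Filter.atTop := by
      refine le_trans (lintegral_mono_ae ?_) (lintegral_liminf_le (fun j =>
        ENNReal.measurable_ofReal.comp
          ((Real.measurable_log.comp (hDmeas j)).neg.max measurable_const)))
      filter_upwards [hconv, hpos] with θ h1 h2
      have h3 : Filter.Tendsto
          (fun j => ENNReal.ofReal (max (-Real.log (discretizedDensity μ j θ)) 0))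
          Filter.atTop (nhds (ENNReal.ofReal (max (-Real.log (w θ)) 0))) := by
        apply (ENNReal.continuous_ofReal.tendsto _).comp
        exact (((Real.continuousAt_log (ne_of_gt h2)).tendsto.comp h1).neg).max
          tendsto_const_nhds
      rw [h3.liminf_eq]
    have hα : ∀ ε : ℝ, 0 < ε → ∀ᶠ j in Filter.atTop,
        (∫ θ, max (-Real.log (w θ)) 0 ∂ν) - ε
          ≤ ∫ θ, max (-Real.log (discretizedDensity μ j θ)) 0 ∂ν := by
      intro ε hε
      by_cases hcase : ∫ θ, max (-Real.log (w θ)) 0 ∂ν ≤ ε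
      · filter_upwards with j
        have h1 : (0:ℝ) ≤ ∫ θ, max (-Real.log (discretizedDensity μ j θ)) 0 ∂ν :=
          integral_nonneg fun θ => le_max_right _ _
        linarith
      · push_neg at hcase
        have hb : ENNReal.ofReal ((∫ θ, max (-Real.log (w θ)) 0 ∂ν) - ε)
            < ∫⁻ θ, ENNReal.ofReal (max (-Real.log (w θ)) 0) ∂ν := by
          conv_rhs => rw [← ENNReal.ofReal_toReal haw_top]
          rw [← hNw_lin]
          exact (ENNReal.ofReal_lt_ofReal_iff (by linarith)).2 (by linarith)
        have hev := Filter.eventually_lt_of_lt_liminf (lt_of_lt_of_le hb hfatou)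
        filter_upwards [hev] with j hj
        rw [hNlin j]
        have h1 := (ENNReal.ofReal_lt_iff_lt_toReal (by linarith) (hNtop j)).1 hj
        linarith
    have hwsplit : ∫ θ, Real.log (w θ) ∂ν
        = (∫ θ, max (Real.log (w θ)) 0 ∂ν) - ∫ θ, max (-Real.log (w θ)) 0 ∂ν := by
      calc ∫ θ, Real.log (w θ) ∂ν
          = ∫ θ, (max (Real.log (w θ)) 0 - max (-Real.log (w θ)) 0) ∂ν :=
            integral_congr_ae (Filter.Eventually.of_forall fun θ =>
              (DiscEnt.max_sub_max_neg _).symm)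
        _ = _ := integral_sub hint.pos_part hint.neg_part
    have hmain : Filter.Tendsto (fun j => ∫ θ, Real.log (discretizedDensity μ j θ) ∂ν)
        Filter.atTop (nhds (∫ θ, Real.log (w θ) ∂ν)) := by
      rw [tendsto_order]
      constructor
      · intro a ha
        filter_upwards with j using lt_of_lt_of_le ha (hlow j)
      · intro a ha
        have hε : (0:ℝ) < (a - ∫ θ, Real.log (w θ) ∂ν) / 3 := by linarith
        filter_upwards [hβ _ hε, hα _ hε] with j h1 h2
        rw [hlog_split j]
        linarith [hwsplit]
    have hfun : (fun j : ℕ => Hrev ν (discretizedDensity μ j))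
        = fun j : ℕ => (((-(∫ θ, Real.log (discretizedDensity μ j θ) ∂ν)) : ℝ) : EReal) := by
      funext j
      rw [Hrev, if_pos ⟨hDpos j, hlogDint j⟩]
    rw [show Hrev ν w = (((-(∫ θ, Real.log (w θ) ∂ν)) : ℝ) : EReal) by
      rw [Hrev, if_pos ⟨hpos, hint⟩], hfun]
    exact EReal.tendsto_coe.2 hmain.neg
  · rw [show Hrev ν w = (⊤ : EReal) by rw [Hrev, if_neg hcond]]
    rw [EReal.tendsto_nhds_top_iff_real]
    intro x
    have hFmeasD : ∀ j : ℕ, Measurable (fun θ => DiscEnt.Fneg (discretizedDensity μ j θ)) :=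
      fun j => DiscEnt.measurable_Fneg.comp (hDmeas j)
    have hstep1 : ∀ᵐ θ ∂ν, DiscEnt.Fneg (w θ)
        ≤ Filter.liminf (fun j => DiscEnt.Fneg (discretizedDensity μ j θ)) Filter.atTop := by
      filter_upwards [hconv] with θ h1
      rcases lt_or_ge 0 (w θ) with h2 | h2
      · have h4 : Filter.Tendsto
            (fun j => ENNReal.ofReal (max (-Real.log (discretizedDensity μ j θ)) 0))
            Filter.atTop (nhds (ENNReal.ofReal (max (-Real.log (w θ)) 0))) := by
          apply (ENNReal.continuous_ofReal.tendsto _).comp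
          exact (((Real.continuousAt_log (ne_of_gt h2)).tendsto.comp h1).neg).max
            tendsto_const_nhds
        have hev : ∀ᶠ j in Filter.atTop, 0 < discretizedDensity μ j θ :=
          h1.eventually (eventually_gt_nhds h2)
        have h3 : Filter.Tendsto (fun j => DiscEnt.Fneg (discretizedDensity μ j θ))
            Filter.atTop (nhds (DiscEnt.Fneg (w θ))) := by
          rw [show DiscEnt.Fneg (w θ) = ENNReal.ofReal (max (-Real.log (w θ)) 0) from
            if_pos h2]
          refine Filter.Tendsto.congr' ?_ h4
          filter_upwards [hev] with j hj
          exact (if_pos hj).symm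
        rw [h3.liminf_eq]
      · have hw0' : w θ = 0 := le_antisymm h2 (hw0 θ)
        rw [hw0'] at h1
        have h3 := DiscEnt.Fneg_tendsto_top h1
        rw [h3.liminf_eq]
        exact le_top
    have hstep2 : ∫⁻ θ, DiscEnt.Fneg (w θ) ∂ν = ⊤ := by
      by_cases hpos : ∀ᵐ θ ∂ν, 0 < w θ
      · have hni : ¬ Integrable (fun θ => Real.log (w θ)) ν := fun h => hcond ⟨hpos, h⟩
        have htop : ∫⁻ θ, ENNReal.ofReal (max (-Real.log (w θ)) 0) ∂ν = ⊤ := by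
          by_contra h1
          apply hni
          refine ⟨(Real.measurable_log.comp hw).aestronglyMeasurable, ?_⟩
          rw [hasFiniteIntegral_iff_norm]
          have hplus : ∫⁻ θ, ENNReal.ofReal (max (Real.log (w θ)) 0) ∂ν < ⊤ := by
            calc ∫⁻ θ, ENNReal.ofReal (max (Real.log (w θ)) 0) ∂ν
                ≤ ∫⁻ θ, ENNReal.ofReal (w θ) ∂ν :=
                  lintegral_mono fun θ => ENNReal.ofReal_le_ofReal (DiscEnt.maxlog_le (hw0 θ))
              _ = ν.withDensity (fun θ => ENNReal.ofReal (w θ)) Set.univ := by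
                  rw [withDensity_apply _ MeasurableSet.univ, Measure.restrict_univ]
              _ ≤ μ Set.univ := hWle _
              _ < ⊤ := by rw [measure_univ]; exact ENNReal.one_lt_top
          calc ∫⁻ θ, ENNReal.ofReal ‖Real.log (w θ)‖ ∂ν
              = ∫⁻ θ, (ENNReal.ofReal (max (Real.log (w θ)) 0)
                  + ENNReal.ofReal (max (-Real.log (w θ)) 0)) ∂ν := by
                apply lintegral_congr fun θ => ?_
                rw [← ENNReal.ofReal_add (le_max_right _ _) (le_max_right _ _),
                  DiscEnt.max_add_max_neg, Real.norm_eq_abs]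
            _ = (∫⁻ θ, ENNReal.ofReal (max (Real.log (w θ)) 0) ∂ν)
                  + ∫⁻ θ, ENNReal.ofReal (max (-Real.log (w θ)) 0) ∂ν :=
                lintegral_add_left
                  (ENNReal.measurable_ofReal.comp
                    ((Real.measurable_log.comp hw).max measurable_const)) _
            _ < ⊤ := ENNReal.add_lt_top.2 ⟨hplus, (Ne.lt_top h1)⟩
        calc ∫⁻ θ, DiscEnt.Fneg (w θ) ∂ν
            = ∫⁻ θ, ENNReal.ofReal (max (-Real.log (w θ)) 0) ∂ν :=
              lintegral_congr_ae (hpos.mono fun θ h => if_pos h)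
          _ = ⊤ := htop
      · have hZ : ν {θ | ¬ 0 < w θ} ≠ 0 := by
          intro h0
          exact hpos (by rwa [MeasureTheory.ae_iff])
        have hZmeas : MeasurableSet {θ : ℝ | ¬ 0 < w θ} := by
          have h1 : {θ : ℝ | ¬ 0 < w θ} = {θ | w θ ≤ 0} := by
            ext θ; simp [not_lt]
          rw [h1]
          exact measurableSet_le hw measurable_const
        have h1 : ∫⁻ θ in {θ : ℝ | ¬ 0 < w θ}, DiscEnt.Fneg (w θ) ∂ν = ⊤ := by
          calc ∫⁻ θ in {θ : ℝ | ¬ 0 < w θ}, DiscEnt.Fneg (w θ) ∂ν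
              = ∫⁻ _θ in {θ : ℝ | ¬ 0 < w θ}, ⊤ ∂ν :=
                setLIntegral_congr_fun hZmeas (fun θ hθ => if_neg hθ)
            _ = ⊤ * ν {θ : ℝ | ¬ 0 < w θ} := setLIntegral_const _ _
            _ = ⊤ := ENNReal.top_mul hZ
        exact top_unique (h1 ▸ setLIntegral_le_lintegral _ _)
    have hliminf : Filter.liminf
        (fun j => ∫⁻ θ, DiscEnt.Fneg (discretizedDensity μ j θ) ∂ν) Filter.atTop = ⊤ := by
      apply top_unique
      calc (⊤:ℝ≥0∞) = ∫⁻ θ, DiscEnt.Fneg (w θ) ∂ν := hstep2.symm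
        _ ≤ ∫⁻ θ, Filter.liminf (fun j => DiscEnt.Fneg (discretizedDensity μ j θ))
              Filter.atTop ∂ν := lintegral_mono_ae hstep1
        _ ≤ _ := lintegral_liminf_le hFmeasD
    have hev : ∀ᶠ j in Filter.atTop, ENNReal.ofReal (|x| + 2)
        < ∫⁻ θ, DiscEnt.Fneg (discretizedDensity μ j θ) ∂ν := by
      exact Filter.eventually_lt_of_lt_liminf
        (by rw [hliminf]; exact ENNReal.ofReal_lt_top)
    filter_upwards [hev] with j hj
    rw [Hrev]
    split_ifs with hc
    · obtain ⟨hDposj, hlogintj⟩ := hc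
      have hae : (fun θ => ENNReal.ofReal (max (-Real.log (discretizedDensity μ j θ)) 0))
          =ᵐ[ν] (fun θ => DiscEnt.Fneg (discretizedDensity μ j θ)) := by
        filter_upwards [hDposj] with θ h1
        exact (if_pos h1).symm
      have h2 : ENNReal.ofReal (|x| + 2)
          < ∫⁻ θ, ENNReal.ofReal (max (-Real.log (discretizedDensity μ j θ)) 0) ∂ν := by
        rwa [lintegral_congr_ae hae]
      have h3 := (ENNReal.ofReal_lt_iff_lt_toReal (by positivity) (hNtop j)).1 h2
      rw [← hNlin j] at h3
      have h4 := hPle j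
      refine EReal.coe_lt_coe_iff.2 ?_
      have h5 : ∫ θ, Real.log (discretizedDensity μ j θ) ∂ν ≤ 1 - (|x| + 2) := by
        rw [hlog_split j]
        linarith
      have h6 : x ≤ |x| := le_abs_self x
      linarith
    · exact EReal.coe_lt_top x
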